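/- If V is a discrete gradient vector field on a finite simplicial complex K (i.e., V has no nontrivial closed V-paths), then the number of critical p-simplices of V is at least the p-th Betti number of K, for every p. -/

import Mathlib

/-- An abstract finite simplicial complex on vertex type `α`. -/
structure AbsComplex (α : Type*) [DecidableEq α] where
  faces : Finset (Finset α)
  nonempty_of_mem : ∀ σ ∈ faces, σ.Nonempty
  down_closed : ∀ σ ∈ faces, ∀ τ ⊆ σ, τ.Nonempty → τ ∈ faces

variable {α : Type*} [DecidableEq α] [LinearOrder α]

/-- The `p`-dimensional simplices of `K` (those with `p + 1` vertices). -/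
def pCells (K : AbsComplex α) (p : ℕ) : Finset (Finset α) :=
  K.faces.filter fun σ => σ.card = p + 1

/-- The simplicial boundary matrix `∂_{p+1}` over `ℚ`, with the usual signs coming
from the ordering of the vertices. -/
noncomputable def bdry (K : AbsComplex α) (p : ℕ) :
    Matrix ↥(pCells K p) ↥(pCells K (p + 1)) ℚ :=
  fun τ σ =>
    if τ.1 ⊆ σ.1 then
      ∑ a ∈ σ.1 \ τ.1, (-1 : ℚ) ^ (List.idxOf a (σ.1.sort (· ≤ ·)))
    else 0

/-- The `p`-th Betti number of `K`: the rank over `ℚ` of the `p`-th simplicial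
homology, computed as `dim C_p - rank ∂_p - rank ∂_{p+1}`. -/
noncomputable def betti (K : AbsComplex α) : ℕ → ℕ
  | 0 => (pCells K 0).card - (bdry K 0).rank
  | p + 1 => (pCells K (p + 1)).card - (bdry K p).rank - (bdry K (p + 1)).rank

/-- A discrete vector field on `K`. -/
def IsDVF (K : AbsComplex α) (V : Finset (Finset α × Finset α)) : Prop :=
  (∀ p ∈ V, p.1 ∈ K.faces ∧ p.2 ∈ K.faces ∧ p.1 ⊆ p.2 ∧ p.2.card = p.1.card + 1) ∧
  (∀ σ : Finset α, (V.filter (fun p => p.1 = σ ∨ p.2 = σ)).card ≤ 1)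

/-- A simplex is critical for `V` if it appears in no pair of `V`. -/
def IsCritical (V : Finset (Finset α × Finset α)) (σ : Finset α) : Prop :=
  ∀ p ∈ V, p.1 ≠ σ ∧ p.2 ≠ σ

/-- The list `L = [(τ₀,σ₀), (τ₁,σ₁), …]` is a V-path chain: every pair belongs to
`V` and consecutive pairs satisfy `τ_{i+1} < σ_i`, `τ_{i+1} ≠ τ_i`. -/
def IsVChain (V : Finset (Finset α × Finset α)) (L : List (Finset α × Finset α)) : Prop :=
  (∀ p ∈ L, p ∈ V) ∧ L.Chain' (fun p q => q.1 ⊆ p.2 ∧ q.1 ≠ p.1)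

/-- `V` has a nontrivial closed V-path `τ₀, σ₀, …, σ_r, τ_{r+1} = τ₀`. -/
def HasClosedVPath (V : Finset (Finset α × Finset α)) : Prop :=
  ∃ (p : Finset α × Finset α) (L : List (Finset α × Finset α)),
    IsVChain V (p :: L) ∧
    p.1 ⊆ ((p :: L).getLast (List.cons_ne_nil p L)).2 ∧
    p.1 ≠ ((p :: L).getLast (List.cons_ne_nil p L)).1

/-- A discrete gradient vector field: a discrete vector field with no nontrivial
closed V-paths. -/
def IsGradient (K : AbsComplex α) (V : Finset (Finset α × Finset α)) : Prop :=
  IsDVF K V ∧ ¬ HasClosedVPath V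

/-! ### Auxiliary lemmas -/

/-- In a discrete vector field, two pairs with the same first component coincide. -/
lemma DVF.fst_inj {K : AbsComplex α} {V : Finset (Finset α × Finset α)} (hV : IsDVF K V)
    {q q' : Finset α × Finset α} (hq : q ∈ V) (hq' : q' ∈ V) (h : q.1 = q'.1) : q = q' := by
  by_contra hne
  have hsub : ({q, q'} : Finset (Finset α × Finset α)) ⊆
      V.filter (fun p => p.1 = q.1 ∨ p.2 = q.1) := by
    intro x hx
    rcases Finset.mem_insert.1 hx with rfl | hx
    · exact Finset.mem_filter.2 ⟨hq, Or.inl rfl⟩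
    · rcases Finset.mem_singleton.1 hx with rfl
      exact Finset.mem_filter.2 ⟨hq', Or.inl h.symm⟩
  have := (Finset.card_le_card hsub).trans (hV.2 q.1)
  rw [Finset.card_pair hne] at this
  omega

/-- Rank of an arbitrary submatrix is at most the rank of the matrix. -/
lemma rank_submatrix_le' {m n k l : Type*} [Fintype m] [Fintype n] [Fintype k] [Fintype l]
    [DecidableEq m] [DecidableEq n]
    (A : Matrix m n ℚ) (f : k → m) (g : l → n) :
    (A.submatrix f g).rank ≤ A.rank := by
  have h : A.submatrix f g =
      ((1 : Matrix m m ℚ).submatrix f id) * (A * ((1 : Matrix n n ℚ).submatrix id g)) := by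
    ext i j
    simp [Matrix.mul_apply, Matrix.one_apply, Finset.sum_ite_eq, Finset.sum_ite_eq']
  rw [h]
  exact (Matrix.rank_mul_le_right _ _).trans (Matrix.rank_mul_le_left _ _)

/-- The boundary matrix entry at a codimension-one face is nonzero. -/
lemma bdry_pair_ne_zero (K : AbsComplex α) (p : ℕ) (τ : ↥(pCells K p))
    (σ : ↥(pCells K (p + 1))) (h : τ.1 ⊆ σ.1) : bdry K p τ σ ≠ 0 := by
  have hτ : (τ.1 : Finset α).card = p + 1 := (Finset.mem_filter.1 τ.2).2
  have hσ : (σ.1 : Finset α).card = p + 2 := (Finset.mem_filter.1 σ.2).2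
  have hcard : (σ.1 \ τ.1).card = 1 := by
    rw [Finset.card_sdiff_of_subset h, hσ, hτ]
    omega
  obtain ⟨a, ha⟩ := Finset.card_eq_one.1 hcard
  simp only [bdry, if_pos h, ha, Finset.sum_singleton]
  exact pow_ne_zero _ (by norm_num)

lemma bdry_subset_of_ne_zero (K : AbsComplex α) (p : ℕ) {τ : ↥(pCells K p)}
    {σ : ↥(pCells K (p + 1))} (h : bdry K p τ σ ≠ 0) : τ.1 ⊆ σ.1 := by
  by_contra hsub
  simp [bdry, hsub] at h

/-- Key lemma: the number of V-pairs of type `(p, p+1)` is at most the rank of `∂_{p+1}`. -/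
lemma pairs_le_rank (K : AbsComplex α) (V : Finset (Finset α × Finset α))
    (hV : IsGradient K V) (p : ℕ) :
    (V.filter fun q => q.1.card = p + 1).card ≤ (bdry K p).rank := by
  classical
  obtain ⟨hDVF, hNC⟩ := hV
  set S : Finset (Finset α × Finset α) := V.filter fun q => q.1.card = p + 1 with hS
  have hSV : ∀ q : ↥S, (q : Finset α × Finset α) ∈ V := fun q => (Finset.mem_filter.1 q.2).1
  have hScard : ∀ q : ↥S, (q : Finset α × Finset α).1.card = p + 1 :=
    fun q => (Finset.mem_filter.1 q.2).2
  -- row and column index maps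
  have hrowmem : ∀ q : ↥S, (q : Finset α × Finset α).1 ∈ pCells K p := fun q =>
    Finset.mem_filter.2 ⟨(hDVF.1 _ (hSV q)).1, hScard q⟩
  have hcolmem : ∀ q : ↥S, (q : Finset α × Finset α).2 ∈ pCells K (p + 1) := fun q => by
    refine Finset.mem_filter.2 ⟨(hDVF.1 _ (hSV q)).2.1, ?_⟩
    rw [(hDVF.1 _ (hSV q)).2.2.2, hScard q]
  let r : ↥S → ↥(pCells K p) := fun q => ⟨(q : Finset α × Finset α).1, hrowmem q⟩
  let c : ↥S → ↥(pCells K (p + 1)) := fun q => ⟨(q : Finset α × Finset α).2, hcolmem q⟩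
  set M : Matrix ↥S ↥S ℚ := (bdry K p).submatrix r c with hM
  -- det M ≠ 0
  have hdiag : ∀ q : ↥S, M q q ≠ 0 := fun q =>
    bdry_pair_ne_zero K p (r q) (c q) (hDVF.1 _ (hSV q)).2.2.1
  have hdet : M.det ≠ 0 := by
    rw [Matrix.det_apply]
    rw [Finset.sum_eq_single (1 : Equiv.Perm ↥S)]
    · simpa using Finset.prod_ne_zero_iff.2 fun q _ => hdiag q
    · intro π _ hπ
      -- show the term of any non-identity permutation vanishes
      have hprod : ∏ i : ↥S, M (π i) i = 0 := by
        by_contra hp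
        have hnz : ∀ i : ↥S, M (π i) i ≠ 0 :=
          fun i => Finset.prod_ne_zero_iff.1 hp i (Finset.mem_univ i)
        have hsub : ∀ i : ↥S, ((π i : ↥S) : Finset α × Finset α).1 ⊆
            ((i : ↥S) : Finset α × Finset α).2 :=
          fun i => bdry_subset_of_ne_zero K p (hnz i)
        -- find a non-fixed point
        have : ∃ i₀ : ↥S, π i₀ ≠ i₀ := by
          by_contra h
          push_neg at h
          exact hπ (Equiv.ext h)
        obtain ⟨i₀, hi₀⟩ := this
        -- minimal return time
        have hex : ∃ n, 0 < n ∧ (π ^ n) i₀ = i₀ := by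
          refine ⟨orderOf π, orderOf_pos π, ?_⟩
          rw [pow_orderOf_eq_one]; rfl
        have hk0 : 0 < Nat.find hex := (Nat.find_spec hex).1
        have hkfix : (π ^ Nat.find hex) i₀ = i₀ := (Nat.find_spec hex).2
        set k := Nat.find hex with hk
        have hmin : ∀ m, 0 < m → m < k → (π ^ m) i₀ ≠ i₀ := by
          intro m hm hmk hfix
          exact Nat.find_min hex hmk ⟨hm, hfix⟩
        have hk2 : 2 ≤ k := by
          by_contra h2
          have hk1 : k = 1 := by omega
          rw [hk1, pow_one] at hkfix
          exact hi₀ hkfix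
        -- no point on the orbit within the first k steps is fixed
        have hnotfix : ∀ j, j < k → π ((π ^ j) i₀) ≠ (π ^ j) i₀ := by
          intro j hj hfix
          have hfix' : ∀ m : ℕ, (π ^ m) ((π ^ j) i₀) = (π ^ j) i₀ := by
            intro m
            induction m with
            | zero => rfl
            | succ n ih => rw [pow_succ', Equiv.Perm.mul_apply, ih, hfix]
          have h1 : (π ^ (k - j)) ((π ^ j) i₀) = i₀ := by
            have : (π ^ (k - j)) * (π ^ j) = π ^ k := by
              rw [← pow_add]; congr 1; omega
            calc (π ^ (k - j)) ((π ^ j) i₀) = ((π ^ (k - j)) * (π ^ j)) i₀ := rfl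
              _ = (π ^ k) i₀ := by rw [this]
              _ = i₀ := hkfix
          have h2 : (π ^ j) i₀ = i₀ := by
            conv_lhs => rw [← hfix' (k - j)]
            exact h1
          rw [h2] at hfix
          exact hi₀ hfix
        -- build the closed V-path
        set f : ℕ → Finset α × Finset α := fun j => (((π ^ j) i₀ : ↥S) : Finset α × Finset α)
          with hf
        have hfmem : ∀ j, f j ∈ V := fun j => hSV _
        have hstep : ∀ j, f (j + 1) = (((π ((π ^ j) i₀)) : ↥S) : Finset α × Finset α) := by
          intro j
          simp only [hf, pow_succ', Equiv.Perm.mul_apply]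
        have hchain : ∀ j, j + 1 < k → (f (j + 1)).1 ⊆ (f j).2 ∧ (f (j + 1)).1 ≠ (f j).1 := by
          intro j hj
          constructor
          · rw [hstep j]; exact hsub ((π ^ j) i₀)
          · intro heq
            have : f (j + 1) = f j :=
              DVF.fst_inj hDVF (hfmem (j + 1)) (hfmem j) heq
            have hinj : ((π ^ (j + 1)) i₀ : ↥S) = (π ^ j) i₀ := Subtype.ext this
            rw [pow_succ'] at hinj
            exact hnotfix j (by omega) hinj
        apply hNC
        have hlist : f 0 :: (List.range (k - 1)).map (fun j => f (j + 1)) =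
            (List.range k).map f := by
          have : k = (k - 1) + 1 := by omega
          rw [this, List.range_succ_eq_map, List.map_cons, List.map_map]
          rfl
        have hlast : (f 0 :: (List.range (k - 1)).map (fun j => f (j + 1))).getLast
            (List.cons_ne_nil _ _) = f (k - 1) := by
          have h2 : (List.range k).map f ≠ [] := hlist ▸ List.cons_ne_nil _ _
          have h3 : (List.range k).map f = ((List.range (k - 1)).map f) ++ [f (k - 1)] := by
            conv_lhs => rw [show k = (k - 1) + 1 by omega, List.range_succ]
            rw [List.map_append]
            rfl
          rw [List.getLast_congr _ h2 hlist, List.getLast_congr _ (h3 ▸ h2) h3,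
            List.getLast_append]
          simp
        refine ⟨f 0, (List.range (k - 1)).map (fun j => f (j + 1)), ?_, ?_, ?_⟩
        · -- it is a V-chain
          rw [IsVChain, hlist]
          constructor
          · intro q hq
            obtain ⟨j, _, rfl⟩ := List.mem_map.1 hq
            exact hfmem j
          · rw [List.Chain', List.isChain_map]
            have : k = (k - 1) + 1 := by omega
            rw [this, List.isChain_range_succ]
            intro m hm
            exact hchain m (by omega)
        · -- closing face relation
          rw [hlast]
          have h1 : f 0 = (i₀ : Finset α × Finset α) := by
            simp only [hf, pow_zero]; rfl
          have h2 : (((π ((π ^ (k - 1)) i₀)) : ↥S) : Finset α × Finset α) = f 0 := by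
            have hfixk : π ((π ^ (k - 1)) i₀) = i₀ := by
              have hmul : π * (π ^ (k - 1)) = π ^ k := by
                rw [← pow_succ']; congr 1; omega
              calc π ((π ^ (k - 1)) i₀) = (π * π ^ (k - 1)) i₀ := rfl
                _ = (π ^ k) i₀ := by rw [hmul]
                _ = i₀ := hkfix
            rw [hfixk, h1]
          rw [← h2]
          exact hsub ((π ^ (k - 1)) i₀)
        · -- nontriviality
          rw [hlast]
          intro heq
          have : f 0 = f (k - 1) :=
            DVF.fst_inj hDVF (hfmem 0) (hfmem (k - 1)) heq
          have hinj : ((π ^ 0) i₀ : ↥S) = (π ^ (k - 1)) i₀ := Subtype.ext this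
          have hfin : (π ^ (k - 1)) i₀ = i₀ := by
            rw [← hinj, pow_zero]; rfl
          exact hmin (k - 1) (by omega) (by omega) hfin
      rw [hprod, smul_zero]
    · intro h
      exact absurd (Finset.mem_univ _) h
  -- conclude
  have hunit : IsUnit M := (Matrix.isUnit_iff_isUnit_det M).2 (isUnit_iff_ne_zero.2 hdet)
  have hrank : M.rank = S.card := by rw [Matrix.rank_of_isUnit M hunit, Fintype.card_coe]
  calc S.card = M.rank := hrank.symm
    _ ≤ (bdry K p).rank := rank_submatrix_le' _ _ _

/-- **discrete Morse inequality.** For a discrete gradient vector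
field `V` on a finite simplicial complex `K`, the number of critical
`p`-simplices is at least the `p`-th Betti number of `K`, for every `p`. -/
theorem morse_inequality (K : AbsComplex α) (V : Finset (Finset α × Finset α))
    (hV : IsGradient K V) (p : ℕ) :
    betti K p ≤ ((pCells K p).filter fun σ => ∀ q ∈ V, q.1 ≠ σ ∧ q.2 ≠ σ).card := by
  classical
  obtain ⟨hDVF, hNC⟩ := hV
  -- split the p-cells into critical and non-critical
  have hsplit : ((pCells K p).filter fun σ => ∀ q ∈ V, q.1 ≠ σ ∧ q.2 ≠ σ).card +
      ((pCells K p).filter fun σ => ¬ ∀ q ∈ V, q.1 ≠ σ ∧ q.2 ≠ σ).card = (pCells K p).card :=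
    Finset.card_filter_add_card_filter_not _
  -- the non-critical p-cells inject into the pairs
  set A := V.filter fun q => q.1.card = p + 1 with hA
  set B := V.filter fun q => q.2.card = p + 1 with hB
  have hnoncrit : ((pCells K p).filter fun σ => ¬ ∀ q ∈ V, q.1 ≠ σ ∧ q.2 ≠ σ).card ≤
      A.card + B.card := by
    have hsub : ((pCells K p).filter fun σ => ¬ ∀ q ∈ V, q.1 ≠ σ ∧ q.2 ≠ σ) ⊆
        A.image Prod.fst ∪ B.image Prod.snd := by
      intro σ hσ
      obtain ⟨hcell, hcond⟩ := Finset.mem_filter.1 hσ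
      push_neg at hcond
      obtain ⟨q, hqV, hq⟩ := hcond
      have hcard : σ.card = p + 1 := (Finset.mem_filter.1 hcell).2
      rcases Classical.em (q.1 = σ) with h1 | h1
      · refine Finset.mem_union_left _ (Finset.mem_image.2 ⟨q, ?_, h1⟩)
        exact Finset.mem_filter.2 ⟨hqV, by rw [h1, hcard]⟩
      · have h2 : q.2 = σ := (hq h1)
        refine Finset.mem_union_right _ (Finset.mem_image.2 ⟨q, ?_, h2⟩)
        exact Finset.mem_filter.2 ⟨hqV, by rw [h2, hcard]⟩
    calc ((pCells K p).filter fun σ => ¬ ∀ q ∈ V, q.1 ≠ σ ∧ q.2 ≠ σ).card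
        ≤ (A.image Prod.fst ∪ B.image Prod.snd).card := Finset.card_le_card hsub
      _ ≤ (A.image Prod.fst).card + (B.image Prod.snd).card := Finset.card_union_le _ _
      _ ≤ A.card + B.card := Nat.add_le_add (Finset.card_image_le) (Finset.card_image_le)
  have hrankA : A.card ≤ (bdry K p).rank := pairs_le_rank K V ⟨hDVF, hNC⟩ p
  -- now case on p
  cases p with
  | zero =>
    have hB0 : B.card = 0 := by
      rw [Finset.card_eq_zero]
      rw [Finset.eq_empty_iff_forall_notMem]
      intro q hq
      obtain ⟨hqV, hq2⟩ := Finset.mem_filter.1 hq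
      have h1 := (hDVF.1 q hqV).2.2.2
      have h2 : q.1.Nonempty := K.nonempty_of_mem q.1 (hDVF.1 q hqV).1
      have := Finset.card_pos.2 h2
      omega
    show (pCells K 0).card - (bdry K 0).rank ≤ _
    omega
  | succ d =>
    have hrankB : B.card ≤ (bdry K d).rank := by
      have hBA : B = V.filter fun q => q.1.card = d + 1 := by
        apply Finset.filter_congr
        intro q hq
        have h1 := (hDVF.1 q hq).2.2.2
        constructor <;> intro h <;> omega
      rw [hBA]
      exact pairs_le_rank K V ⟨hDVF, hNC⟩ d
    show (pCells K (d + 1)).card - (bdry K d).rank - (bdry K (d + 1)).rank ≤ _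
    omega
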